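/- For p ∈ (0,1) with p ≠ 1/2, the number q̂ = (-1 + p + √(1 - 3p + 3p²))/(2p - 1) lies in (0,1) and satisfies the symmetry property: it is a fixed point of the best-response map, i.e., ∂v/∂r (p, q̂, q̂) = 0, where v(p,q,r) = p·(2q - qr)/(2q + 2r - 2qr) + (1-p)·(1 - q + r - qr)/(2(1 - qr)). -/

import Mathlib

lemma deriv_aux (p q : ℝ) (hq0 : 0 < q) (hq1 : q < 1)
    (hquad : (2*p-1)*q^2 + 2*(1-p)*q - p = 0) :
    deriv (fun r : ℝ => p * (2*q - q*r) / (2*q + 2*r - 2*q*r) +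
      (1 - p) * (1 - q + r - q*r) / (2 * (1 - q*r))) q = 0 := by
  have hid : HasDerivAt (fun r : ℝ => r) 1 q := hasDerivAt_id q
  have hne1 : 2*q + 2*q - 2*q*q ≠ 0 := by nlinarith
  have hne2 : 2*(1 - q*q) ≠ 0 := by nlinarith
  have hn1 : HasDerivAt (fun r : ℝ => p * (2*q - q*r)) (p * (0 - q*1)) q :=
    ((hasDerivAt_const q (2*q)).sub (hid.const_mul q)).const_mul p
  have hd1 : HasDerivAt (fun r : ℝ => 2*q + 2*r - 2*q*r) (0 + 2*1 - 2*q*1) q :=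
    ((hasDerivAt_const q (2*q)).add (hid.const_mul 2)).sub (hid.const_mul (2*q))
  have hn2 : HasDerivAt (fun r : ℝ => (1-p) * (1 - q + r - q*r)) ((1-p) * (0 + 1 - q*1)) q :=
    (((hasDerivAt_const q (1 - q)).add hid).sub (hid.const_mul q)).const_mul (1-p)
  have hd2 : HasDerivAt (fun r : ℝ => 2 * (1 - q*r)) (2 * (0 - q*1)) q :=
    ((hasDerivAt_const q 1).sub (hid.const_mul q)).const_mul 2
  have h := (hn1.div hd1 hne1).add (hn2.div hd2 hne2)
  rw [(show HasDerivAt (fun r : ℝ => p * (2*q - q*r) / (2*q + 2*r - 2*q*r) +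
      (1 - p) * (1 - q + r - q*r) / (2 * (1 - q*r))) _ q from h).deriv]
  have e1 : (2:ℝ)*q + 2*q - 2*q*q = 2*q*(2-q) := by ring
  have hA : 2*q*(2-q) ≠ 0 := e1 ▸ hne1
  have hB : (1:ℝ) - q*q ≠ 0 := by nlinarith
  have key : (p * (0 - q*1) * (2*q + 2*q - 2*q*q) - p * (2*q - q*q) * (0 + 2*1 - 2*q*1)) /
        (2*q + 2*q - 2*q*q)^2 +
      ((1-p) * (0 + 1 - q*1) * (2*(1 - q*q)) - (1-p) * (1 - q + q - q*q) * (2 * (0 - q*1))) /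
        (2*(1 - q*q))^2
      = ((2*p-1)*q^2 + 2*(1-p)*q - p) / (2*q*(2-q)*(1 - q*q)) := by
    rw [div_add_div _ _ (pow_ne_zero 2 hne1) (pow_ne_zero 2 hne2), div_eq_div_iff (mul_ne_zero (pow_ne_zero 2 hne1) (pow_ne_zero 2 hne2)) (mul_ne_zero hA hB)]
    ring
  rw [key, hquad, zero_div]

theorem symmetric_game_equilibrium (p : ℝ) (hp : p ∈ Set.Ioo (0:ℝ) 1) (hp2 : p ≠ 1/2) :
    let v : ℝ → ℝ → ℝ := fun q r =>
      p * (2*q - q*r) / (2*q + 2*r - 2*q*r) +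
      (1 - p) * (1 - q + r - q*r) / (2 * (1 - q*r))
    let qhat : ℝ := (-1 + p + Real.sqrt (1 - 3*p + 3*p^2)) / (2*p - 1)
    qhat ∈ Set.Ioo (0:ℝ) 1 ∧ deriv (fun r => v qhat r) qhat = 0 := by
  obtain ⟨hp0, hp1⟩ := hp
  intro v qhat
  have hden : 2*p - 1 ≠ 0 := by
    intro h; apply hp2; linarith
  set s := Real.sqrt (1 - 3*p + 3*p^2) with hs
  have hsnn : 0 ≤ s := Real.sqrt_nonneg _
  have hs2 : s^2 = 1 - 3*p + 3*p^2 := Real.sq_sqrt (by nlinarith)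
  have hmem : qhat ∈ Set.Ioo (0:ℝ) 1 := by
    rcases lt_or_gt_of_ne hp2 with hlt | hgt
    · -- p < 1/2 : rewrite with positive denominator
      have h1 : (0:ℝ) < 1 - 2*p := by linarith
      have hq_eq : qhat = (1 - p - s) / (1 - 2*p) := by
        show (-1 + p + s) / (2*p - 1) = (1 - p - s) / (1 - 2*p)
        rw [div_eq_div_iff hden (by linarith)]
        ring
      have hsp : p < s := by nlinarith
      have hs1p : s < 1 - p := by nlinarith
      constructor
      · rw [hq_eq]; exact div_pos (by linarith) h1
      · rw [hq_eq, div_lt_one h1]; linarith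
    · have h1 : (0:ℝ) < 2*p - 1 := by linarith
      have hsp : s < p := by nlinarith
      have hs1p : 1 - p < s := by nlinarith
      constructor
      · exact div_pos (by linarith) h1
      · show (-1 + p + s) / (2*p - 1) < 1
        rw [div_lt_one h1]; linarith
  refine ⟨hmem, ?_⟩
  obtain ⟨hq0, hq1⟩ := hmem
  have hquad : (2*p-1)*qhat^2 + 2*(1-p)*qhat - p = 0 := by
    show (2*p-1)*((-1 + p + s) / (2*p - 1))^2 + 2*(1-p)*((-1 + p + s) / (2*p - 1)) - p = 0
    field_simp
    nlinarith [hs2]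
  exact deriv_aux p qhat hq0 hq1 hquad
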